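/- Consistency lemma: let M = (f, p) be an incentive-compatible, individually rational, and nonbossy mechanism in a single-parameter environment, let o ≠ o' be two feasible outcomes in 𝒪, and let q, q' ∈ (ℝ≥0)ⁿ be vectors such that p(w) = q for every w with f(w) = o and p(w) = q' for every w with f(w) = o' (such vectors exist by the payment characterization). If v, v' ∈ (ℝ≥0)ⁿ satisfy min{vᵢ, vᵢ'} ≥ max{qᵢ, qᵢ'} for every agent i, then f(v) = o implies f(v') ≠ o'. -/

import Mathlib

/-! Statement 13: consistency lemma for IC, IR, nonbossy single-parameter mechanisms. -/

open Function NNReal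

/-- Quasilinear utility of agent `i` with value `vi`, allocation `S` (agent `i`
receives an item iff `i ∈ S`) and payment `qi`. -/
noncomputable def utility {n : ℕ} (vi : ℝ≥0) (i : Fin n) (S : Finset (Fin n))
    (qi : ℝ≥0) : ℝ :=
  (if i ∈ S then (vi : ℝ) else 0) - (qi : ℝ)

/-- Incentive-compatibility in a single-parameter environment, where ties are
broken in favor of receiving an item. -/
def SPIC {n : ℕ} (f : (Fin n → ℝ≥0) → Finset (Fin n))
    (p : (Fin n → ℝ≥0) → Fin n → ℝ≥0) : Prop :=
  ∀ (v : Fin n → ℝ≥0) (i : Fin n) (x : ℝ≥0),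
    utility (v i) i (f v) (p v i) >
      utility (v i) i (f (update v i x)) (p (update v i x) i) ∨
    (utility (v i) i (f v) (p v i) =
      utility (v i) i (f (update v i x)) (p (update v i x) i) ∧
      (i ∈ f (update v i x) → i ∈ f v))

/-- Individual rationality. -/
def SPIR {n : ℕ} (f : (Fin n → ℝ≥0) → Finset (Fin n))
    (p : (Fin n → ℝ≥0) → Fin n → ℝ≥0) : Prop :=
  ∀ (v : Fin n → ℝ≥0) (i : Fin n), 0 ≤ utility (v i) i (f v) (p v i)

/-- Nonbossiness: no agent can change the outcome or payments of others without
changing their own allocation or payment. -/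
def SPNB {n : ℕ} (f : (Fin n → ℝ≥0) → Finset (Fin n))
    (p : (Fin n → ℝ≥0) → Fin n → ℝ≥0) : Prop :=
  ∀ (v : Fin n → ℝ≥0) (i : Fin n) (x : ℝ≥0),
    (i ∈ f v ↔ i ∈ f (update v i x)) → p v i = p (update v i x) i →
    f v = f (update v i x) ∧ p v = p (update v i x)

lemma stepA {n : ℕ} {f : (Fin n → ℝ≥0) → Finset (Fin n)}
    {p : (Fin n → ℝ≥0) → Fin n → ℝ≥0}
    (hIC : SPIC f p) (hNB : SPNB f p) {w : Fin n → ℝ≥0} {i : Fin n} {x : ℝ≥0}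
    (hi : i ∈ f w) (hx : p w i ≤ x) :
    f (update w i x) = f w ∧ p (update w i x) = p w := by
  set w' := update w i x with hw'
  have hback : update w' i (w i) = w := by
    rw [hw', Function.update_idem, Function.update_eq_self]
  have hxr : ((p w i : ℝ)) ≤ (x : ℝ) := by exact_mod_cast hx
  have hmem : i ∈ f w' := by
    by_contra h
    rcases hIC w' i (w i) with hlt | ⟨heq, himp⟩
    · rw [hback] at hlt
      simp only [utility, hw', Function.update_self, if_pos hi, if_neg (show i ∉ f (update w i x) from h)] at hlt
      have := (p w' i).coe_nonneg
      linarith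
    · rw [hback] at himp
      exact h (himp hi)
  have hge : utility (w i) i (f w) (p w i) ≥ utility (w i) i (f w') (p w' i) := by
    rcases hIC w i x with h | ⟨h, _⟩
    · exact le_of_lt h
    · exact le_of_eq h.symm
  have hge' : utility x i (f w') (p w' i) ≥ utility x i (f w) (p w i) := by
    rcases hIC w' i (w i) with h | ⟨h, _⟩
    · rw [hback] at h
      have : w' i = x := by rw [hw', Function.update_self]
      rw [this] at h
      exact le_of_lt h
    · rw [hback] at h
      have : w' i = x := by rw [hw', Function.update_self]
      rw [this] at h
      exact le_of_eq h.symm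
  simp only [utility, if_pos hi, if_pos hmem] at hge hge'
  have hpp : p w i = p w' i := by
    have : (p w i : ℝ) = p w' i := by linarith
    exact_mod_cast this
  obtain ⟨h1, h2⟩ := hNB w i x (by rw [← hw']; exact ⟨fun _ => hmem, fun _ => hi⟩)
    (by rw [← hw']; exact hpp)
  exact ⟨h1.symm, h2.symm⟩

lemma stepB {n : ℕ} {f : (Fin n → ℝ≥0) → Finset (Fin n)}
    {p : (Fin n → ℝ≥0) → Fin n → ℝ≥0}
    (hIC : SPIC f p) (hIR : SPIR f p) (hNB : SPNB f p)
    {w : Fin n → ℝ≥0} {i : Fin n} {x : ℝ≥0}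
    (hi : i ∉ f w) (hx : x ≤ w i) :
    f (update w i x) = f w ∧ p (update w i x) = p w := by
  set w' := update w i x with hw'
  have hback : update w' i (w i) = w := by
    rw [hw', Function.update_idem, Function.update_eq_self]
  have hwx : w' i = x := by rw [hw', Function.update_self]
  have hq0 : p w i = 0 := by
    have := hIR w i
    simp only [utility, if_neg hi] at this
    have : (p w i : ℝ) ≤ 0 := by linarith
    exact le_antisymm (by exact_mod_cast this) zero_le
  have hxr : (x : ℝ) ≤ w i := by exact_mod_cast hx
  have hmem : i ∉ f w' := by
    intro h
    -- from IC at w', deviation back to w i : x - r ≥ -q = 0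
    have hge' : utility x i (f w') (p w' i) ≥ utility x i (f w) (p w i) := by
      rcases hIC w' i (w i) with h2 | ⟨h2, _⟩ <;> rw [hback, hwx] at h2
      · exact le_of_lt h2
      · exact le_of_eq h2.symm
    simp only [utility, if_pos h, if_neg hi, hq0] at hge'
    -- hge' : x - p w' i ≥ 0 - 0
    -- from IC at w
    rcases hIC w i x with h2 | ⟨h2, himp⟩
    · simp only [utility, if_neg hi, if_pos h, ← hw', hq0] at h2
      push_cast at hge' h2
      linarith
    · rw [← hw'] at himp
      exact hi (himp h)
  have hr0 : p w' i = 0 := by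
    have := hIR w' i
    simp only [utility, if_neg hmem] at this
    have : (p w' i : ℝ) ≤ 0 := by linarith
    exact le_antisymm (by exact_mod_cast this) zero_le
  obtain ⟨h1, h2⟩ := hNB w i x (by rw [← hw']; exact ⟨fun h => absurd h hi, fun h => absurd h hmem⟩)
    (by rw [← hw', hq0, hr0])
  exact ⟨h1.symm, h2.symm⟩

lemma hybrid {n : ℕ} {f : (Fin n → ℝ≥0) → Finset (Fin n)}
    {p : (Fin n → ℝ≥0) → Fin n → ℝ≥0}
    (hIC : SPIC f p) (hIR : SPIR f p) (hNB : SPNB f p)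
    {o : Finset (Fin n)} {q : Fin n → ℝ≥0}
    (hq : ∀ w, f w = o → p w = q)
    (w u : Fin n → ℝ≥0) (hw : f w = o)
    (h1 : ∀ i, q i ≤ u i) (h2 : ∀ i, i ∉ o → u i ≤ w i) :
    f u = o := by
  have main : ∀ s : Finset (Fin n), f (fun i => if i ∈ s then u i else w i) = o := by
    intro s
    induction s using Finset.induction_on with
    | empty => simpa using hw
    | @insert a s ha ih =>
      set g : Fin n → ℝ≥0 := fun i => if i ∈ s then u i else w i with hg
      have hupd : (fun i => if i ∈ insert a s then u i else w i) = update g a (u a) := by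
        funext i
        rcases eq_or_ne i a with rfl | h
        · simp [Function.update_self]
        · simp [Function.update_of_ne h, hg, Finset.mem_insert, h]
      rw [hupd]
      by_cases hao : a ∈ o
      · have hia : a ∈ f g := by rw [ih]; exact hao
        have hpq : p g = q := hq g ih
        have := (stepA (x := u a) hIC hNB hia (by rw [hpq]; exact h1 a)).1
        rw [this, ih]
      · have hia : a ∉ f g := by rw [ih]; exact hao
        have hx : u a ≤ g a := by
          show u a ≤ (if a ∈ s then u a else w a)
          rw [if_neg ha]; exact h2 a hao
        have := (stepB hIC hIR hNB hia hx).1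
        rw [this, ih]
  have := main Finset.univ
  simpa using this

theorem consistency_lemma (n : ℕ) (Feas : Finset (Finset (Fin n)))
    (f : (Fin n → ℝ≥0) → Finset (Fin n)) (p : (Fin n → ℝ≥0) → Fin n → ℝ≥0)
    (hfeas : ∀ v, f v ∈ Feas)
    (hIC : SPIC f p) (hIR : SPIR f p) (hNB : SPNB f p)
    (o o' : Finset (Fin n)) (ho : o ∈ Feas) (ho' : o' ∈ Feas) (hne : o ≠ o')
    (q q' : Fin n → ℝ≥0)
    (hq : ∀ w, f w = o → p w = q) (hq' : ∀ w, f w = o' → p w = q')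
    (v v' : Fin n → ℝ≥0)
    (hvv' : ∀ i, max (q i) (q' i) ≤ min (v i) (v' i)) :
    f v = o → f v' ≠ o' := by
  intro hv hv'
  have hq1 : ∀ i, q i ≤ v i := fun i =>
    le_trans (le_max_left _ _) ((hvv' i).trans (min_le_left _ _))
  have hq2 : ∀ i, q i ≤ v' i := fun i =>
    le_trans (le_max_left _ _) ((hvv' i).trans (min_le_right _ _))
  have hq3 : ∀ i, q' i ≤ v i := fun i =>
    le_trans (le_max_right _ _) ((hvv' i).trans (min_le_left _ _))
  have hq4 : ∀ i, q' i ≤ v' i := fun i =>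
    le_trans (le_max_right _ _) ((hvv' i).trans (min_le_right _ _))
  have hmo : f (fun i => if i ∈ o' then v i else if i ∈ o then v' i
      else min (v i) (v' i)) = o := by
    refine hybrid hIC hIR hNB hq v _ hv ?_ ?_
    · intro i
      by_cases h : i ∈ o'
      · simpa [h] using hq1 i
      · by_cases h2 : i ∈ o
        · simpa [h, h2] using hq2 i
        · simpa [h, h2] using le_min (hq1 i) (hq2 i)
    · intro i hio
      by_cases h : i ∈ o'
      · simp [h]
      · simp [h, hio]
  have hmo' : f (fun i => if i ∈ o' then v i else if i ∈ o then v' i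
      else min (v i) (v' i)) = o' := by
    refine hybrid hIC hIR hNB hq' v' _ hv' ?_ ?_
    · intro i
      by_cases h : i ∈ o'
      · simpa [h] using hq3 i
      · by_cases h2 : i ∈ o
        · simpa [h, h2] using hq4 i
        · simpa [h, h2] using le_min (hq3 i) (hq4 i)
    · intro i hio'
      by_cases h2 : i ∈ o
      · simp [hio', h2]
      · simp [hio', h2]
  exact hne (hmo.symm.trans hmo')
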